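/- If ũ ∈ ℝ^{m+n} is a solution of the deflated system 𝒫 K ũ = 𝒫 f, then the vector u = Z_k (Z_kᵀ K Z_k)⁻¹ Z_kᵀ f + 𝒫ᵀ ũ satisfies K u = f. -/

import Mathlib

open Matrix

/-- If `ũ` solves the deflated system `Pcal K ũ = Pcal f`, then
`u = Z_k (Z_kᵀ K Z_k)⁻¹ Z_kᵀ f + Pcalᵀ ũ` satisfies `K u = f`. -/
theorem deflated_solution_correction (m n k : ℕ)
    (M : Matrix (Fin m) (Fin m) ℝ) (N : Matrix (Fin n) (Fin n) ℝ)
    (A : Matrix (Fin m) (Fin n) ℝ)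
    (hM : M.PosDef) (hN : N.PosDef)
    (Uk : Matrix (Fin m) (Fin k) ℝ) (Vk : Matrix (Fin n) (Fin k) ℝ)
    (Sig : Matrix (Fin k) (Fin k) ℝ)
    (hSigDiag : ∀ i j, i ≠ j → Sig i j = 0) (hSigNonneg : ∀ i, 0 ≤ Sig i i)
    (hUk : Ukᵀ * M * Uk = 1) (hVk : Vkᵀ * N * Vk = 1)
    (hAV : A * Vk = M * Uk * Sig) (hAU : Aᵀ * Uk = N * Vk * Sig)
    (P : Matrix (Fin m) (Fin m) ℝ) (hP : P = 1 - M * Uk * Ukᵀ)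
    (Q : Matrix (Fin n) (Fin n) ℝ) (hQ : Q = 1 - Vk * Vkᵀ * N)
    (K : Matrix (Fin m ⊕ Fin n) (Fin m ⊕ Fin n) ℝ)
    (hK : K = Matrix.fromBlocks M A Aᵀ (-N))
    (Pcal : Matrix (Fin m ⊕ Fin n) (Fin m ⊕ Fin n) ℝ)
    (hPcal : Pcal = Matrix.fromBlocks P 0 0 Qᵀ)
    (Z : Matrix (Fin m ⊕ Fin n) (Fin k ⊕ Fin k) ℝ)
    (hZ : Z = Matrix.fromBlocks Uk 0 0 Vk)
    (f ut : Fin m ⊕ Fin n → ℝ)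
    (hut : (Pcal * K).mulVec ut = Pcal.mulVec f)
    (u : Fin m ⊕ Fin n → ℝ)
    (hu : u = Z.mulVec (((Zᵀ * K * Z)⁻¹).mulVec (Zᵀ.mulVec f)) + Pcalᵀ.mulVec ut) :
    K.mulVec u = f := by
  -- symmetry facts
  have hMsymm : Mᵀ = M := by
    have := hM.isHermitian; rw [Matrix.IsHermitian, Matrix.conjTranspose_eq_transpose_of_trivial] at this; exact this
  have hNsymm : Nᵀ = N := by
    have := hN.isHermitian; rw [Matrix.IsHermitian, Matrix.conjTranspose_eq_transpose_of_trivial] at this; exact this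
  have hSigSymm : Sigᵀ = Sig := by
    ext i j
    by_cases h : i = j
    · subst h; simp
    · simp [transpose_apply, hSigDiag i j h, hSigDiag j i (Ne.symm h)]
  have h2 : Ukᵀ * A * Vk = Sig := by
    rw [Matrix.mul_assoc, hAV]
    simp only [← Matrix.mul_assoc]
    rw [hUk, one_mul]
  have h3 : Vkᵀ * Aᵀ * Uk = Sig := by
    rw [Matrix.mul_assoc, hAU]
    simp only [← Matrix.mul_assoc]
    rw [hVk, one_mul]
  -- the small matrix W
  set W : Matrix (Fin k ⊕ Fin k) (Fin k ⊕ Fin k) ℝ := Matrix.fromBlocks 1 Sig Sig (-1) with hWdef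
  have hW : Zᵀ * K * Z = W := by
    subst hZ hK
    rw [Matrix.fromBlocks_transpose, Matrix.fromBlocks_multiply, Matrix.fromBlocks_multiply]
    simp [h2, h3, hUk, hVk, Matrix.mul_neg]
    exact hWdef.symm
  -- W is invertible
  have hWW : W * W = Matrix.fromBlocks (1 + Sig * Sig) 0 0 (1 + Sig * Sig) := by
    rw [hWdef, Matrix.fromBlocks_multiply]
    simp [Matrix.mul_neg, Matrix.neg_mul]
    abel
  have hposd : (1 + Sig * Sig).PosDef := by
    have : (Sig * Sig).PosSemidef := by
      have := Matrix.posSemidef_conjTranspose_mul_self Sig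
      rw [Matrix.conjTranspose_eq_transpose_of_trivial, hSigSymm] at this; exact this
    exact (Matrix.PosDef.one).add_posSemidef this
  have hWdet : IsUnit W.det := by
    have h1 : IsUnit (W * W).det := by
      rw [hWW, Matrix.det_fromBlocks_zero₁₂]
      exact (hposd.det_pos.ne'.isUnit).mul (hposd.det_pos.ne'.isUnit)
    rw [Matrix.det_mul] at h1
    exact isUnit_of_mul_isUnit_left h1
  have hWinv : W * W⁻¹ = 1 := Matrix.mul_nonsing_inv _ hWdet
  -- K * Z = D * W
  set D : Matrix (Fin m ⊕ Fin n) (Fin k ⊕ Fin k) ℝ := Matrix.fromBlocks (M * Uk) 0 0 (N * Vk) with hDdef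
  have hKZ : K * Z = D * W := by
    subst hK
    rw [hZ, hDdef, hWdef, Matrix.fromBlocks_multiply, Matrix.fromBlocks_multiply]
    simp [hAV, hAU, Matrix.mul_neg, Matrix.neg_mul]
  -- the correction part
  have hKZW : K * Z * W⁻¹ * Zᵀ = Matrix.fromBlocks (M * Uk * Ukᵀ) 0 0 (N * Vk * Vkᵀ) := by
    rw [hKZ, Matrix.mul_assoc D W W⁻¹, hWinv, Matrix.mul_one, hDdef, hZ,
      Matrix.fromBlocks_transpose, Matrix.fromBlocks_multiply]
    simp [Matrix.mul_assoc]
  have hsum : K * Z * W⁻¹ * Zᵀ + Pcal = 1 := by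
    rw [hKZW, hPcal, hP, hQ, Matrix.fromBlocks_add]
    have hQT : (1 - Vk * Vkᵀ * N)ᵀ = 1 - N * Vk * Vkᵀ := by
      simp [transpose_sub, transpose_mul, hNsymm, Matrix.mul_assoc]
    rw [hQT]
    rw [← Matrix.fromBlocks_one, Matrix.fromBlocks_inj]
    refine ⟨by abel, by simp, by simp, by abel⟩
  -- commutation K * Pcalᵀ = Pcal * K
  have hUA : Ukᵀ * A = Sig * Vkᵀ * N := by
    have h := congrArg Matrix.transpose hAU
    simpa [Matrix.transpose_mul, hNsymm, hSigSymm, Matrix.mul_assoc] using h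
  have hVA : Vkᵀ * Aᵀ = Sig * Ukᵀ * M := by
    have h := congrArg Matrix.transpose hAV
    simpa [Matrix.transpose_mul, hMsymm, hSigSymm, Matrix.mul_assoc] using h
  have g2 : A * (Vk * (Vkᵀ * N)) = M * (Uk * (Ukᵀ * A)) := by
    simp only [← Matrix.mul_assoc]
    rw [hAV, Matrix.mul_assoc (M * Uk) Ukᵀ A, hUA]
    simp only [Matrix.mul_assoc]
  have g3 : Aᵀ * (Uk * (Ukᵀ * M)) = N * (Vk * (Vkᵀ * Aᵀ)) := by
    simp only [← Matrix.mul_assoc]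
    rw [hAU, Matrix.mul_assoc (N * Vk) Vkᵀ Aᵀ, hVA]
    simp only [Matrix.mul_assoc]
  have hcomm : K * Pcalᵀ = Pcal * K := by
    rw [hK, hPcal, hP, hQ, Matrix.fromBlocks_transpose, Matrix.fromBlocks_multiply,
      Matrix.fromBlocks_multiply]
    have hPT : (1 - M * Uk * Ukᵀ)ᵀ = 1 - Uk * Ukᵀ * M := by
      simp [transpose_sub, transpose_mul, hMsymm, Matrix.mul_assoc]
    have hQT : (1 - Vk * Vkᵀ * N)ᵀ = 1 - N * Vk * Vkᵀ := by
      simp [transpose_sub, transpose_mul, hNsymm, Matrix.mul_assoc]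
    rw [hPT, hQT]
    simp [Matrix.mul_sub, Matrix.sub_mul, Matrix.mul_assoc, hNsymm, g2, g3]
  -- finish
  rw [hu, Matrix.mulVec_add, hW]
  rw [Matrix.mulVec_mulVec, Matrix.mulVec_mulVec, Matrix.mulVec_mulVec, Matrix.mulVec_mulVec, hcomm, hut]
  rw [show K * Z * W⁻¹ * Zᵀ = 1 - Pcal from by rw [← hsum]; abel]
  rw [Matrix.sub_mulVec, Matrix.one_mulVec]
  abel
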